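/- Let f : N × N → M be a full non-degenerate Λ-bilinear map between finitely generated modules over a Noetherian commutative ring Λ. Then the largest ring of scalars R(f) is a finitely generated Λ-module, and Z(Sym(f)), R(f), N, and M are all simultaneously zero, finite, or infinite. -/

import Mathlib

/-- A ring of scalars of a Λ-bilinear map `f : N × N → M`: a commutative
subring `Δ` of `End_Λ(N)` together with a faithful (injective) compatible
ring action `g` on `M` satisfying `f(αx,y) = f(x,αy) = α·f(x,y)`. -/
def IsRingOfScalars {Λ N M : Type*} [CommRing Λ] [AddCommGroup N] [Module Λ N]
    [AddCommGroup M] [Module Λ M] (f : N →ₗ[Λ] N →ₗ[Λ] M)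
    (Δ : Subring (Module.End Λ N)) : Prop :=
  (∀ α β : Δ, α * β = β * α) ∧
  ∃ g : Δ →+* Module.End Λ M, Function.Injective g ∧
    ∀ (α : Δ) (x y : N),
      f ((α : Module.End Λ N) x) y = f x ((α : Module.End Λ N) y) ∧
      f ((α : Module.End Λ N) x) y = g α (f x y)

/-- for a full non-degenerate Λ-bilinear map between finitely
generated modules over a Noetherian commutative ring, the largest ring of
scalars `R(f)` is a finitely generated Λ-module, and `Z(Sym f)`, `R(f)`, `N`
and `M` are all simultaneously zero, finite, or infinite. -/
theorem stmt6 {Λ N M : Type*} [CommRing Λ] [IsNoetherianRing Λ]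
    [AddCommGroup N] [Module Λ N] [Module.Finite Λ N]
    [AddCommGroup M] [Module Λ M] [Module.Finite Λ M]
    (f : N →ₗ[Λ] N →ₗ[Λ] M)
    (hfull : Submodule.span Λ {z : M | ∃ x y : N, f x y = z} = ⊤)
    (hndl : ∀ a : N, (∀ x : N, f a x = 0) → a = 0)
    (hndr : ∀ a : N, (∀ x : N, f x a = 0) → a = 0)
    (Sym Z : Set (Module.End Λ N))
    (hSym : Sym = {α | ∀ x y : N, f (α x) y = f x (α y)})
    (hZ : Z = {α | α ∈ Sym ∧ ∀ β ∈ Sym, α * β = β * α})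
    (R : Subring (Module.End Λ N))
    (hR : IsRingOfScalars f R)
    (hmax : ∀ Δ : Subring (Module.End Λ N), IsRingOfScalars f Δ → Δ ≤ R) :
    (∃ s : Finset (Module.End Λ N), (↑s : Set (Module.End Λ N)) ⊆ (R : Set (Module.End Λ N)) ∧
      ∀ x ∈ R, x ∈ Submodule.span Λ (↑s : Set (Module.End Λ N))) ∧
    (((R : Set (Module.End Λ N)) ⊆ {0}) ↔ ∀ x : N, x = 0) ∧
    ((Z ⊆ {0}) ↔ ∀ x : N, x = 0) ∧
    ((∀ x : N, x = 0) ↔ ∀ x : M, x = 0) ∧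
    ((R : Set (Module.End Λ N)).Finite ↔ (Set.univ : Set N).Finite) ∧
    (Z.Finite ↔ (Set.univ : Set N).Finite) ∧
    ((Set.univ : Set N).Finite ↔ (Set.univ : Set M).Finite) := by
  classical
  obtain ⟨hcomm, g, hginj, hg⟩ := hR
  set F : Set M := {z : M | ∃ x y : N, f x y = z} with hF
  -- uniqueness of an induced endomorphism of M
  have huniq : ∀ (G G' : Module.End Λ M), (∀ x y : N, G (f x y) = G' (f x y)) → G = G' := by
    intro G G' h
    ext m
    have hm : m ∈ Submodule.span Λ F := hfull ▸ Submodule.mem_top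
    induction hm using Submodule.span_induction with
    | mem z hz => obtain ⟨x, y, rfl⟩ := hz; exact h x y
    | zero => simp
    | add a b _ _ ha hb => simp [map_add, ha, hb]
    | smul c a _ ha => simp [map_smul, ha]
  -- existence of an induced endomorphism, for α in the Λ-span of R
  have hex : ∀ α ∈ Submodule.span Λ (R : Set (Module.End Λ N)),
      ∃ G : Module.End Λ M, ∀ x y : N, G (f x y) = f (α x) y := by
    intro α hα
    induction hα using Submodule.span_induction with
    | mem r hr => exact ⟨g ⟨r, hr⟩, fun x y => ((hg ⟨r, hr⟩ x y).2).symm⟩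
    | zero => exact ⟨0, by simp⟩
    | add a b _ _ ha hb =>
        obtain ⟨G, hG⟩ := ha; obtain ⟨G', hG'⟩ := hb
        exact ⟨G + G', fun x y => by
          simp [LinearMap.add_apply, map_add, hG, hG']⟩
    | smul c a _ ha =>
        obtain ⟨G, hG⟩ := ha
        exact ⟨c • G, fun x y => by
          simp [LinearMap.smul_apply, map_smul, hG]⟩
  -- the symmetry property on the span
  have hsymm : ∀ α ∈ Submodule.span Λ (R : Set (Module.End Λ N)),
      ∀ x y : N, f (α x) y = f x (α y) := by
    intro α hα
    induction hα using Submodule.span_induction with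
    | mem r hr => exact fun x y => (hg ⟨r, hr⟩ x y).1
    | zero => intro x y; simp
    | add a b _ _ ha hb => intro x y; simp [LinearMap.add_apply, map_add, ha, hb]
    | smul c a _ ha => intro x y; simp [LinearMap.smul_apply, map_smul, ha]
  -- commutativity on the span
  have hcomm' : ∀ α β : Module.End Λ N, α ∈ Submodule.span Λ (R : Set (Module.End Λ N)) →
      β ∈ Submodule.span Λ (R : Set (Module.End Λ N)) → α * β = β * α := by
    intro α β hα hβ
    obtain ⟨G, hG⟩ := hex α hα
    ext x
    have key : ∀ y, f ((α * β) x) y = f ((β * α) x) y := by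
      intro y
      calc f ((α * β) x) y = f (α (β x)) y := by rw [Module.End.mul_apply]
        _ = G (f (β x) y) := (hG (β x) y).symm
        _ = G (f x (β y)) := by rw [hsymm β hβ x y]
        _ = f (α x) (β y) := hG x (β y)
        _ = f (β (α x)) y := (hsymm β hβ (α x) y).symm
        _ = f ((β * α) x) y := by rw [Module.End.mul_apply]
    have h0 := hndl ((α * β) x - (β * α) x) (fun y => by
      rw [map_sub, LinearMap.sub_apply, key y, sub_self])
    exact sub_eq_zero.mp h0
  -- the subalgebra generated by R
  set Δalg : Subalgebra Λ (Module.End Λ N) := Algebra.adjoin Λ (R : Set (Module.End Λ N))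
    with hΔalg
  have hΔmem : ∀ a : Module.End Λ N,
      a ∈ Δalg ↔ a ∈ Submodule.span Λ (R : Set (Module.End Λ N)) := by
    intro a
    have h1 : Submonoid.closure (R : Set (Module.End Λ N)) = R.toSubmonoid := by
      rw [← Subring.coe_toSubmonoid, Submonoid.closure_eq]
    rw [← Subalgebra.mem_toSubmodule, hΔalg, Algebra.adjoin_eq_span, h1]
    rfl
  set Δ : Subring (Module.End Λ N) := Δalg.toSubring with hΔ
  have hmemΔ : ∀ a : Module.End Λ N,
      a ∈ Δ ↔ a ∈ Submodule.span Λ (R : Set (Module.End Λ N)) := by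
    intro a
    rw [hΔ, Subalgebra.mem_toSubring]
    exact hΔmem a
  choose G hGspec using hex
  have hΔscalars : IsRingOfScalars f Δ := by
    constructor
    · intro a b
      exact Subtype.ext (hcomm' _ _ ((hmemΔ _).1 a.2) ((hmemΔ _).1 b.2))
    · refine ⟨{ toFun := fun a => G (a : Module.End Λ N) ((hmemΔ _).1 a.2)
                map_one' := huniq _ _ (fun x y => by
                  rw [hGspec]; simp)
                map_mul' := fun a b => huniq _ _ (fun x y => by
                  rw [hGspec, Module.End.mul_apply, hGspec, hGspec]
                  simp [Module.End.mul_apply])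
                map_zero' := huniq _ _ (fun x y => by rw [hGspec]; simp)
                map_add' := fun a b => huniq _ _ (fun x y => by
                  rw [hGspec, LinearMap.add_apply, hGspec, hGspec]
                  simp [LinearMap.add_apply, map_add]) }, ?_, ?_⟩
      · intro a b hab
        simp only [RingHom.coe_mk, MonoidHom.coe_mk, OneHom.coe_mk] at hab
        apply Subtype.ext
        ext x
        have h0 : ∀ y, f ((a : Module.End Λ N) x) y = f ((b : Module.End Λ N) x) y := by
          intro y
          rw [← hGspec (a : Module.End Λ N) ((hmemΔ _).1 a.2) x y,
            ← hGspec (b : Module.End Λ N) ((hmemΔ _).1 b.2) x y, hab]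
        have h1 := hndl ((a : Module.End Λ N) x - (b : Module.End Λ N) x) (fun y => by
          rw [map_sub, LinearMap.sub_apply, h0 y, sub_self])
        exact sub_eq_zero.mp h1
      · intro a x y
        exact ⟨hsymm _ ((hmemΔ _).1 a.2) x y,
          (hGspec (a : Module.End Λ N) ((hmemΔ _).1 a.2) x y).symm⟩
  have hΔle : Δ ≤ R := hmax Δ hΔscalars
  have halg : ∀ c : Λ, algebraMap Λ (Module.End Λ N) c ∈ R := fun c =>
    hΔle ((hmemΔ _).2 ((hΔmem _).1 (Δalg.algebraMap_mem c)))
  -- finiteness generation part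
  have hNoeth : IsNoetherian Λ (Module.End Λ N) := by infer_instance
  have hfg : (Submodule.span Λ (R : Set (Module.End Λ N))).FG := IsNoetherian.noetherian _
  obtain ⟨t, ht⟩ := hfg
  have hsubex : ∀ x ∈ t, ∃ s : Finset (Module.End Λ N),
      (↑s : Set (Module.End Λ N)) ⊆ (R : Set (Module.End Λ N)) ∧
      x ∈ Submodule.span Λ (↑s : Set (Module.End Λ N)) := by
    intro x hx
    have hx' : x ∈ Submodule.span Λ (R : Set (Module.End Λ N)) :=
      ht ▸ Submodule.subset_span (Finset.mem_coe.2 hx)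
    exact Submodule.mem_span_finite_of_mem_span hx'
  choose sfun hs1 hs2 using hsubex
  have part1 : ∃ s : Finset (Module.End Λ N),
      (↑s : Set (Module.End Λ N)) ⊆ (R : Set (Module.End Λ N)) ∧
      ∀ x ∈ R, x ∈ Submodule.span Λ (↑s : Set (Module.End Λ N)) := by
    refine ⟨t.attach.biUnion (fun x => sfun x.1 x.2), ?_, ?_⟩
    · intro a ha
      obtain ⟨x, _, hx⟩ := Finset.mem_biUnion.1 (Finset.mem_coe.1 ha)
      exact hs1 x.1 x.2 hx
    · intro x hx
      have hx' : x ∈ Submodule.span Λ (↑t : Set (Module.End Λ N)) := by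
        rw [ht]; exact Submodule.subset_span hx
      refine Submodule.span_le.2 ?_ hx'
      intro y hy
      have hy' := Finset.mem_coe.1 hy
      refine Submodule.span_mono ?_ (hs2 y hy')
      exact_mod_cast Finset.coe_subset.2
        (Finset.subset_biUnion_of_mem (fun x : ↥t => sfun x.1 x.2) (t.mem_attach ⟨y, hy'⟩))
  -- triviality equivalences
  have hEndzero : (∀ x : N, x = 0) → ∀ a : Module.End Λ N, a = 0 := by
    intro h a; ext x; rw [h x]; simp
  have part2 : ((R : Set (Module.End Λ N)) ⊆ {0}) ↔ ∀ x : N, x = 0 := by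
    constructor
    · intro h x
      have h1 : (1 : Module.End Λ N) = 0 := h R.one_mem
      calc x = (1 : Module.End Λ N) x := rfl
        _ = (0 : Module.End Λ N) x := by rw [h1]
        _ = 0 := rfl
    · intro h a _
      simp [hEndzero h a]
  have hone_memZ : (1 : Module.End Λ N) ∈ Z := by
    rw [hZ]
    refine ⟨?_, fun β _ => by rw [one_mul, mul_one]⟩
    rw [hSym]; intro x y; simp
  have part3 : (Z ⊆ {0}) ↔ ∀ x : N, x = 0 := by
    constructor
    · intro h x
      have h1 : (1 : Module.End Λ N) = 0 := h hone_memZ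
      calc x = (1 : Module.End Λ N) x := rfl
        _ = (0 : Module.End Λ N) x := by rw [h1]
        _ = 0 := rfl
    · intro h a _
      simp [hEndzero h a]
  have part4 : (∀ x : N, x = 0) ↔ ∀ x : M, x = 0 := by
    constructor
    · intro h m
      have hm : m ∈ Submodule.span Λ F := hfull ▸ Submodule.mem_top
      have hsub : F ⊆ {0} := by
        rintro z ⟨x, y, rfl⟩
        rw [h x]; simp
      have hle := Submodule.span_mono hsub hm
      simpa using hle
    · intro h x
      exact hndl x (fun y => h _)
  -- finiteness equivalences
  have finN_of_S : ∀ S : Set (Module.End Λ N), S.Finite →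
      (∀ c : Λ, algebraMap Λ (Module.End Λ N) c ∈ S) → (Set.univ : Set N).Finite := by
    intro S hS hSalg
    obtain ⟨t', ht'⟩ := Module.Finite.fg_top (R := Λ) (M := N)
    rw [Set.finite_univ_iff]
    have : Finite ↥S := hS.to_subtype
    have hsurj : Function.Surjective
        (fun c : (↥t' → ↥S) => ∑ i : ↥t', (c i : Module.End Λ N) i.1) := by
      intro x
      have hx : x ∈ Submodule.span Λ (↑t' : Set N) := ht' ▸ Submodule.mem_top
      obtain ⟨cf, -, hcf⟩ := Submodule.mem_span_finset.1 hx
      refine ⟨fun i => ⟨algebraMap Λ (Module.End Λ N) (cf i.1), hSalg _⟩, ?_⟩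
      calc (∑ i : ↥t', algebraMap Λ (Module.End Λ N) (cf i.1) i.1)
          = ∑ i : ↥t', cf i.1 • i.1 := by
            refine Finset.sum_congr rfl (fun i _ => ?_)
            rw [Module.algebraMap_end_apply]
        _ = ∑ i ∈ t', cf i • i := Finset.sum_coe_sort t' (fun i => cf i • i)
        _ = x := hcf
    exact Finite.of_surjective _ hsurj
  have finS_of_N : (Set.univ : Set N).Finite → ∀ S : Set (Module.End Λ N), S.Finite := by
    intro h S
    rw [Set.finite_univ_iff] at h
    have : Finite (Module.End Λ N) :=
      Finite.of_injective (fun a => (a : N → N)) DFunLike.coe_injective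
    exact S.toFinite
  have part5 : (R : Set (Module.End Λ N)).Finite ↔ (Set.univ : Set N).Finite :=
    ⟨fun h => finN_of_S _ h halg, fun h => finS_of_N h _⟩
  have halgZ : ∀ c : Λ, algebraMap Λ (Module.End Λ N) c ∈ Z := by
    intro c
    rw [hZ]
    refine ⟨?_, fun β _ => Algebra.commutes c β⟩
    rw [hSym]
    intro x y
    simp [Module.algebraMap_end_apply, map_smul, LinearMap.smul_apply]
  have part6 : Z.Finite ↔ (Set.univ : Set N).Finite :=
    ⟨fun h => finN_of_S _ h halgZ, fun h => finS_of_N h _⟩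
  have part7 : (Set.univ : Set N).Finite ↔ (Set.univ : Set M).Finite := by
    constructor
    · intro h
      rw [Set.finite_univ_iff] at h
      have hFfin : F.Finite := by
        refine Set.Finite.subset (Set.finite_range (fun p : N × N => f p.1 p.2)) ?_
        rintro z ⟨x, y, rfl⟩
        exact ⟨(x, y), rfl⟩
      rw [Set.finite_univ_iff]
      have : Finite ↥F := hFfin.to_subtype
      have hsurj : Function.Surjective
          (fun d : (↥hFfin.toFinset → ↥F) => ∑ i : ↥hFfin.toFinset, (d i : M)) := by
        intro m
        have hm : m ∈ Submodule.span Λ (↑hFfin.toFinset : Set M) := by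
          rw [Set.Finite.coe_toFinset]
          exact hfull ▸ Submodule.mem_top
        obtain ⟨cf, -, hcf⟩ := Submodule.mem_span_finset.1 hm
        have hmemF : ∀ i : ↥hFfin.toFinset, cf i.1 • i.1 ∈ F := by
          intro i
          obtain ⟨x, y, hxy⟩ := hFfin.mem_toFinset.1 i.2
          exact ⟨cf i.1 • x, y, by rw [map_smul, LinearMap.smul_apply, hxy]⟩
        refine ⟨fun i => ⟨cf i.1 • i.1, hmemF i⟩, ?_⟩
        calc (∑ i : ↥hFfin.toFinset, cf i.1 • i.1)
            = ∑ a ∈ hFfin.toFinset, cf a • a := Finset.sum_coe_sort _ (fun a => cf a • a)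
          _ = m := hcf
      exact Finite.of_surjective _ hsurj
    · intro h
      rw [Set.finite_univ_iff] at h ⊢
      obtain ⟨t', ht'⟩ := Module.Finite.fg_top (R := Λ) (M := N)
      have hinj : Function.Injective (fun a : N => fun i : ↥t' => f a i.1) := by
        intro a b hab
        have hab' : ∀ i : ↥t', f a i.1 = f b i.1 := fun i => congrFun hab i
        have hz : ∀ x : N, (f a - f b) x = 0 := by
          intro x
          have hx : x ∈ Submodule.span Λ (↑t' : Set N) := ht' ▸ Submodule.mem_top
          induction hx using Submodule.span_induction with
          | mem z hz =>
              rw [LinearMap.sub_apply, hab' ⟨z, Finset.mem_coe.1 hz⟩, sub_self]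
          | zero => simp
          | add u v _ _ hu hv => rw [map_add, hu, hv, add_zero]
          | smul c u _ hu => rw [map_smul, hu, smul_zero]
        have h1 := hndl (a - b) (fun x => by
          rw [map_sub]; exact hz x)
        exact sub_eq_zero.mp h1
      exact Finite.of_injective _ hinj
  exact ⟨part1, part2, part3, part4, part5, part6, part7⟩
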